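/- Let X be an uncountable Polish space that is an abelian topological group, and let I be a proper σ-ideal of subsets of X with Borel base containing all singletons, which is invariant under translations and under the map x ↦ -x. If I has the Steinhaus property, i.e., for any two Borel sets A, B ∉ I the complex sum A + B = {a + b : a ∈ A, b ∈ B} contains a nonempty open set, then cov_h(I) = cov(I). -/

import Mathlib

open MeasureTheory Set Pointwise

/-- `B` is a Borel subset of `X`. -/
def IsBorel {X : Type} [TopologicalSpace X] (B : Set X) : Prop :=
  MeasurableSet[borel X] B

/-- `I` is a σ-ideal of subsets of `X` (closed under subsets and countable unions),
containing all singletons, with a Borel base. -/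
def IsNiceIdeal {X : Type} [TopologicalSpace X] (I : Set (Set X)) : Prop :=
  (∀ A B : Set X, A ⊆ B → B ∈ I → A ∈ I) ∧
  (∀ f : ℕ → Set X, (∀ n, f n ∈ I) → (⋃ n, f n) ∈ I) ∧
  (∀ x : X, ({x} : Set X) ∈ I) ∧
  (∀ A ∈ I, ∃ B ∈ I, IsBorel B ∧ A ⊆ B)

/-- `cov_h(I)`: the least cardinality of a subfamily of `I` whose union contains
some Borel set not in `I`. -/
noncomputable def covh {X : Type} [TopologicalSpace X] (I : Set (Set X)) : Cardinal.{0} :=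
  sInf {c : Cardinal.{0} | ∃ 𝒞 : Set (Set X), 𝒞 ⊆ I ∧
    (∃ B : Set X, IsBorel B ∧ B ∉ I ∧ B ⊆ ⋃₀ 𝒞) ∧ c = Cardinal.mk 𝒞}

/-- `cov(I)`: the least cardinality of a subfamily of `I` covering `X`. -/
noncomputable def covI {X : Type} (I : Set (Set X)) : Cardinal.{0} :=
  sInf {c : Cardinal.{0} | ∃ 𝒞 : Set (Set X), 𝒞 ⊆ I ∧ ⋃₀ 𝒞 = Set.univ ∧ c = Cardinal.mk 𝒞}

/-- If `X` is an uncountable Polish abelian topological group and `I` is a proper,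
translation- and negation-invariant σ-ideal with Borel base having the Steinhaus
property, then `cov_h(I) = cov(I)`. -/
theorem steinhaus_cov {X : Type} [TopologicalSpace X] [PolishSpace X] [Uncountable X]
    [AddCommGroup X] [IsTopologicalAddGroup X]
    (I : Set (Set X)) (hI : IsNiceIdeal I)
    (hproper : (Set.univ : Set X) ∉ I)
    (htrans : ∀ A ∈ I, ∀ g : X, (fun x => g + x) '' A ∈ I)
    (hneg : ∀ A ∈ I, (fun x : X => -x) '' A ∈ I)
    (hSt : ∀ A B : Set X, IsBorel A → A ∉ I → IsBorel B → B ∉ I →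
      ∃ U : Set X, IsOpen U ∧ U.Nonempty ∧ U ⊆ A + B) :
    covh I = covI I := by
  obtain ⟨hmono, hcunion, hsingle, -⟩ := hI
  borelize X
  have hBorel_iff : ∀ s : Set X, IsBorel s ↔ MeasurableSet s := fun s => Iff.rfl
  set Sh := {c : Cardinal.{0} | ∃ 𝒞 : Set (Set X), 𝒞 ⊆ I ∧
    (∃ B : Set X, IsBorel B ∧ B ∉ I ∧ B ⊆ ⋃₀ 𝒞) ∧ c = Cardinal.mk 𝒞} with hShdef
  set Sc := {c : Cardinal.{0} | ∃ 𝒞 : Set (Set X), 𝒞 ⊆ I ∧ ⋃₀ 𝒞 = Set.univ ∧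
    c = Cardinal.mk 𝒞} with hScdef
  have hsub : Sc ⊆ Sh := by
    rintro c ⟨𝒞, h1, h2, h3⟩
    exact ⟨𝒞, h1, ⟨Set.univ, (hBorel_iff _).2 MeasurableSet.univ, hproper, by rw [h2]⟩, h3⟩
  have hScne : Sc.Nonempty := by
    refine ⟨_, Set.range (fun x : X => ({x} : Set X)), ?_, ?_, rfl⟩
    · rintro s ⟨x, rfl⟩; exact hsingle x
    · ext x
      simp only [Set.mem_sUnion, Set.mem_univ, iff_true]
      exact ⟨{x}, ⟨x, rfl⟩, rfl⟩
  have h1 : covh I ≤ covI I := csInf_le_csInf (OrderBot.bddBelow _) hScne hsub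
  have hShne : Sh.Nonempty := ⟨_, hsub hScne.choose_spec⟩
  -- the infimum defining covh is attained
  obtain ⟨𝒞, hCI, ⟨B, hBb, hBnI, hBsub⟩, hcard⟩ := csInf_mem hShne
  rw [hBorel_iff] at hBb
  -- 𝒞 is uncountable
  have hκ : Cardinal.aleph0 ≤ Cardinal.mk 𝒞 := by
    by_contra h
    have hcnt : 𝒞.Countable := by
      rw [← Set.countable_coe_iff, ← Cardinal.mk_le_aleph0_iff]
      exact le_of_not_ge h
    rcases 𝒞.eq_empty_or_nonempty with hemp | hne
    · apply hBnI
      apply hmono B {Classical.arbitrary X} _ (hsingle _)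
      intro x hx
      exact absurd (hBsub hx) (by simp [hemp])
    · obtain ⟨f, hf⟩ := hcnt.exists_eq_range hne
      have : ⋃₀ 𝒞 ∈ I := by
        rw [hf, Set.sUnion_range]
        exact hcunion f (fun n => hCI (by rw [hf]; exact ⟨n, rfl⟩))
      exact hBnI (hmono B _ hBsub this)
  -- countable dense set
  obtain ⟨D, hDc, hDd⟩ := TopologicalSpace.exists_countable_dense X
  set T : Set X := ⋃ d ∈ D, (fun x => d + x) '' B with hTdef
  have hTmeas : MeasurableSet T := by
    refine MeasurableSet.biUnion hDc (fun d _ => ?_)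
    rw [Set.image_add_left]
    exact hBb.preimage (measurable_const_add _)
  -- the complement of the union of translates is in I
  have hCmem : Tᶜ ∈ I := by
    by_contra hC
    set Bneg : Set X := (fun x : X => -x) '' B with hBnegdef
    have hBnegeq : Bneg = (fun x : X => -x) ⁻¹' B := by
      ext y
      constructor
      · rintro ⟨b, hb, rfl⟩; simpa using hb
      · intro hy; exact ⟨-y, hy, neg_neg y⟩
    have hBnegmeas : IsBorel Bneg := by
      rw [hBorel_iff, hBnegeq]
      exact hBb.preimage measurable_neg
    have hBnegnI : Bneg ∉ I := by
      intro hmem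
      apply hBnI
      have := hneg Bneg hmem
      rwa [hBnegdef, ← Set.image_comp, show ((fun x : X => -x) ∘ fun x : X => -x) = id from
        funext fun x => neg_neg x, Set.image_id] at this
    obtain ⟨U, hUo, hUne, hUsub⟩ := hSt Tᶜ Bneg ((hBorel_iff _).2 hTmeas.compl) hC hBnegmeas hBnegnI
    obtain ⟨d, hdD, hdU⟩ := hDd.exists_mem_open hUo hUne
    obtain ⟨c, hc, y, hy, hcy⟩ := Set.mem_add.1 (hUsub hdU)
    obtain ⟨b, hb, rfl⟩ := hy
    have hcT : c ∈ T := by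
      refine Set.mem_biUnion hdD ⟨b, hb, ?_⟩
      show d + b = c
      have h : c + -b = d := hcy
      rw [← h]; abel
    exact hc hcT
  -- construct the cover
  set f : Unit ⊕ (↥D × ↥𝒞) → Set X :=
    Sum.elim (fun _ => Tᶜ) (fun p => (fun x => (p.1 : X) + x) '' (p.2 : Set X)) with hfdef
  have hDI : Set.range f ⊆ I := by
    rintro s ⟨(u | ⟨d, C'⟩), rfl⟩
    · exact hCmem
    · exact htrans _ (hCI C'.2) _
  have hDcov : ⋃₀ Set.range f = Set.univ := by
    ext x
    simp only [Set.mem_univ, iff_true]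
    by_cases hx : x ∈ T
    · rw [hTdef, Set.mem_iUnion₂] at hx
      obtain ⟨d, hd, b, hb, hbx⟩ := hx
      obtain ⟨C', hC', hbC'⟩ := hBsub hb
      exact ⟨f (Sum.inr (⟨d, hd⟩, ⟨C', hC'⟩)), ⟨_, rfl⟩, ⟨b, hbC', hbx⟩⟩
    · exact ⟨Tᶜ, ⟨Sum.inl (), rfl⟩, hx⟩
  have hcard2 : Cardinal.mk (Set.range f) ≤ Cardinal.mk 𝒞 := by
    calc Cardinal.mk (Set.range f) ≤ Cardinal.mk (Unit ⊕ (↥D × ↥𝒞)) := Cardinal.mk_range_le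
    _ = 1 + Cardinal.mk ↥D * Cardinal.mk ↥𝒞 := by
        simp [Cardinal.mk_sum, Cardinal.mk_prod]
    _ ≤ Cardinal.mk 𝒞 + Cardinal.mk 𝒞 * Cardinal.mk 𝒞 := by
        gcongr
        · exact le_trans (by simp) hκ
        · exact le_trans ((Cardinal.mk_le_aleph0_iff).2 (Set.countable_coe_iff.2 hDc)) hκ
    _ = Cardinal.mk 𝒞 + Cardinal.mk 𝒞 := by rw [Cardinal.mul_eq_self hκ]
    _ = Cardinal.mk 𝒞 := Cardinal.add_eq_self hκ
  have hch : covh I = Cardinal.mk 𝒞 := hcard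
  have h2 : covI I ≤ covh I := by
    rw [hch]
    calc covI I ≤ Cardinal.mk (Set.range f) :=
      csInf_le (OrderBot.bddBelow _) ⟨Set.range f, hDI, hDcov, rfl⟩
    _ ≤ Cardinal.mk 𝒞 := hcard2
  exact le_antisymm h1 h2
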